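/- Let n ≥ 1, α ∈ [0, 2/(n−1)) (α ∈ [0,∞) if n = 1), p = α + 2, and let (q,p) be admissible with q > 2; let q', p' be the conjugate exponents. Let ψ : ℝⁿ × ℝⁿ × ℝ × [0,∞) → ℂ satisfy |ψ(x,y,t,r)| ≤ C₀ r^α, and set G(z,t,w) = ψ(x,y,t,|w|) w. Then there is a constant C, depending only on n, α, q and C₀, such that for every T > 0 and every u : ℂⁿ × [−T,T] → ℂ that is Schwartz in z for each t and jointly measurable, ( ∫_{−T}^{T} ‖G(z,t,u(z,t))‖_{L^{p'}_z}^{q'} dt )^{1/q'} ≤ C T^{(q−q')/(q q')} ( ess sup_{|t|≤T} ‖u(·,t)‖_{W̃^{1,2}} )^α ( ∫_{−T}^{T} ‖u(·,t)‖_{L^p}^q dt )^{1/q}. -/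

import Mathlib

open MeasureTheory Real ENNReal

noncomputable section

/-- `L_j f = ∂_{x_j} f + (i y_j/2) f`, acting on functions on ℂⁿ ≃ ℝ^{2n}. -/
def Lop (n : ℕ) (j : Fin n) (f : (Fin n → ℂ) → ℂ) (z : Fin n → ℂ) : ℂ :=
  fderiv ℝ f z (Pi.single j 1) + Complex.I * ((z j).im : ℂ) / 2 * f z

/-- `M_j f = ∂_{y_j} f − (i x_j/2) f`, acting on functions on ℂⁿ ≃ ℝ^{2n}. -/
def Mop (n : ℕ) (j : Fin n) (f : (Fin n → ℂ) → ℂ) (z : Fin n → ℂ) : ℂ :=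
  fderiv ℝ f z (Pi.single j Complex.I) - Complex.I * ((z j).re : ℂ) / 2 * f z

/-- The Sobolev norm `‖f‖_{W̃^{1,p}} = max{‖f‖_{L^p}, ‖L_j f‖_{L^p}, ‖M_j f‖_{L^p} : j}`. -/
def sobNorm (n : ℕ) (p : ℝ≥0∞) (f : (Fin n → ℂ) → ℂ) : ℝ≥0∞ :=
  max (eLpNorm f p volume)
    (⨆ j : Fin n, max (eLpNorm (Lop n j f) p volume) (eLpNorm (Mop n j f) p volume))

/-- A pair `(q,p)` is admissible if `2 < q < ∞` and `1/q ≥ n(1/2 − 1/p) ≥ 0`. -/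
def Admissible (n : ℕ) (q p : ℝ) : Prop :=
  2 < q ∧ (n : ℝ) * (1 / 2 - 1 / p) ≤ 1 / q ∧ 0 ≤ (n : ℝ) * (1 / 2 - 1 / p)

namespace Stmt12Aux

open Metric

variable {n : ℕ}

lemma cont_fderiv_apply (f : SchwartzMap (Fin n → ℂ) ℂ) (v : Fin n → ℂ) :
    Continuous (fun z => fderiv ℝ (⇑f) z v) := by
  have h : Continuous (fderiv ℝ (⇑f)) := (f.smooth ⊤).continuous_fderiv (by simp)
  exact h.clm_apply continuous_const

lemma cont_Lop (f : SchwartzMap (Fin n → ℂ) ℂ) (j : Fin n) :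
    Continuous (Lop n j ⇑f) := by
  unfold Lop
  apply Continuous.add (cont_fderiv_apply f _)
  apply Continuous.mul _ f.continuous
  apply Continuous.div_const
  exact continuous_const.mul
    (Complex.continuous_ofReal.comp (Complex.continuous_im.comp (continuous_apply j)))

lemma cont_Mop (f : SchwartzMap (Fin n → ℂ) ℂ) (j : Fin n) :
    Continuous (Mop n j ⇑f) := by
  unfold Mop
  apply Continuous.sub (cont_fderiv_apply f _)
  apply Continuous.mul _ f.continuous
  apply Continuous.div_const
  exact continuous_const.mul
    (Complex.continuous_ofReal.comp (Complex.continuous_re.comp (continuous_apply j)))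

lemma eLpNorm_le_sobNorm (f : (Fin n → ℂ) → ℂ) :
    eLpNorm f 2 volume ≤ sobNorm n 2 f := le_max_left _ _

lemma eLpNorm_Lop_le_sobNorm (f : (Fin n → ℂ) → ℂ) (j : Fin n) :
    eLpNorm (Lop n j f) 2 volume ≤ sobNorm n 2 f :=
  le_trans (le_trans (le_max_left _ _)
    (le_iSup (fun j => max (eLpNorm (Lop n j f) 2 volume) (eLpNorm (Mop n j f) 2 volume)) j))
    (le_max_right _ _)

lemma eLpNorm_Mop_le_sobNorm (f : (Fin n → ℂ) → ℂ) (j : Fin n) :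
    eLpNorm (Mop n j f) 2 volume ≤ sobNorm n 2 f :=
  le_trans (le_trans (le_max_right _ _)
    (le_iSup (fun j => max (eLpNorm (Lop n j f) 2 volume) (eLpNorm (Mop n j f) 2 volume)) j))
    (le_max_right _ _)

/-- real rpow helper: `(normSq w)^(s/2) = ‖w‖^s` -/
lemma normSq_rpow_half (w : ℂ) (s : ℝ) : Complex.normSq w ^ (s / 2) = ‖w‖ ^ s := by
  rw [Complex.normSq_eq_norm_sq, ← Real.rpow_natCast ‖w‖ 2,
    ← Real.rpow_mul (norm_nonneg _), show ((2:ℕ):ℝ) * (s/2) = s by push_cast; ring]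

lemma normSq_rpow_aux (w : ℂ) (s : ℝ) (hs : 2 ≤ s) :
    Complex.normSq w ^ (s / 2 - 1) * ‖w‖ = ‖w‖ ^ (s - 1) := by
  rw [Complex.normSq_eq_norm_sq, ← Real.rpow_natCast ‖w‖ 2,
    ← Real.rpow_mul (norm_nonneg _), show ((2:ℕ):ℝ) * (s/2-1) = s - 2 by push_cast; ring]
  rw [show s - 1 = (s - 2) + 1 by ring, Real.rpow_add' (norm_nonneg _) (by linarith),
    Real.rpow_one]

lemma re_conj_mul_bound (w u : ℂ) : |((starRingEnd ℂ) w * u).re| ≤ ‖w‖ * ‖u‖ := by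
  calc |((starRingEnd ℂ) w * u).re| ≤ ‖(starRingEnd ℂ) w * u‖ :=
        Complex.abs_re_le_norm _
    _ = ‖w‖ * ‖u‖ := by rw [norm_mul, Complex.norm_conj]

lemma single_decomp (j : Fin n) (w : ℂ) :
    (Pi.single j w : Fin n → ℂ) = w.re • (Pi.single j (1:ℂ) : Fin n → ℂ) + w.im • (Pi.single j Complex.I : Fin n → ℂ) := by
  funext i
  by_cases h : i = j
  · subst h
    simp only [Pi.single_apply, if_pos rfl, Pi.add_apply, Pi.smul_apply, Complex.real_smul,
      mul_one]
    rw [mul_comm, ← Complex.re_add_im w]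
    simp
  · simp [Pi.single_apply, h]

lemma opNorm_le_sum_single (D : (Fin n → ℂ) →L[ℝ] ℝ) :
    ‖D‖ ≤ ∑ j : Fin n, (|D (Pi.single j 1)| + |D (Pi.single j Complex.I)|) := by
  refine D.opNorm_le_bound (by positivity) (fun v => ?_)
  have hv : v = ∑ j : Fin n, Pi.single j (v j) := by
    rw [Finset.univ_sum_single]
  conv_lhs => rw [hv]
  rw [map_sum]
  rw [Real.norm_eq_abs]
  calc |∑ j : Fin n, D (Pi.single j (v j))| ≤ ∑ j : Fin n, |D (Pi.single j (v j))| :=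
        Finset.abs_sum_le_sum_abs _ _
    _ ≤ ∑ j : Fin n, (|D (Pi.single j 1)| + |D (Pi.single j Complex.I)|) * ‖v‖ := by
        apply Finset.sum_le_sum
        intro j _
        rw [single_decomp j (v j), map_add, _root_.map_smul, _root_.map_smul]
        have h1 : |(v j).re| ≤ ‖v‖ := le_trans (Complex.abs_re_le_norm _) (norm_le_pi_norm v j)
        have h2 : |(v j).im| ≤ ‖v‖ := le_trans (Complex.abs_im_le_norm _) (norm_le_pi_norm v j)
        calc |(v j).re • D (Pi.single j 1) + (v j).im • D (Pi.single j Complex.I)|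
            ≤ |(v j).re • D (Pi.single j 1)| + |(v j).im • D (Pi.single j Complex.I)| :=
              abs_add_le _ _
          _ = |(v j).re| * |D (Pi.single j 1)| + |(v j).im| * |D (Pi.single j Complex.I)| := by
              simp [abs_mul, smul_eq_mul]
          _ ≤ ‖v‖ * |D (Pi.single j 1)| + ‖v‖ * |D (Pi.single j Complex.I)| := by
              gcongr <;> exact abs_nonneg _
          _ = (|D (Pi.single j 1)| + |D (Pi.single j Complex.I)|) * ‖v‖ := by ring
    _ = (∑ j : Fin n, (|D (Pi.single j 1)| + |D (Pi.single j Complex.I)|)) * ‖v‖ := by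
        rw [Finset.sum_mul]

lemma re_conj_aux (w u : ℂ) (c : ℝ) :
    ((starRingEnd ℂ) w * (u + Complex.I * (c:ℂ) / 2 * w)).re = ((starRingEnd ℂ) w * u).re := by
  have h : (starRingEnd ℂ) w * (Complex.I * (c:ℂ) / 2 * w)
      = Complex.I * (((c/2) * Complex.normSq w : ℝ) : ℂ) := by
    have := Complex.mul_conj w
    push_cast
    calc (starRingEnd ℂ) w * (Complex.I * (c:ℂ) / 2 * w)
        = Complex.I * ((c:ℂ)/2) * (w * (starRingEnd ℂ) w) := by ring
      _ = Complex.I * ((c:ℂ)/2 * (Complex.normSq w : ℂ)) := by rw [this]; ring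
      _ = Complex.I * ((c:ℂ)/2 * (Complex.normSq w : ℂ)) := rfl
  rw [mul_add, Complex.add_re, h]
  simp

lemma grad_lemma (s : ℝ) (hs : 2 ≤ s) (f : SchwartzMap (Fin n → ℂ) ℂ) :
    ContDiff ℝ 1 (fun z => ‖f z‖ ^ s) ∧
    ∀ z, ‖fderiv ℝ (fun z => ‖f z‖ ^ s) z‖ ≤
      s * ‖f z‖ ^ (s-1) * ∑ j : Fin n, (‖Lop n j ⇑f z‖ + ‖Mop n j ⇑f z‖) := by
  have hf1 : ContDiff ℝ 1 ⇑f := f.smooth 1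
  have hdf : Differentiable ℝ ⇑f := hf1.differentiable one_ne_zero
  set q : (Fin n → ℂ) → ℝ := fun z => Complex.normSq (f z) with hqdef
  have hq_eq : q = fun z => (f z).re * (f z).re + (f z).im * (f z).im := by
    funext z; exact Complex.normSq_apply _
  have hre : ContDiff ℝ 1 fun z => (f z).re := Complex.reCLM.contDiff.comp hf1
  have him : ContDiff ℝ 1 fun z => (f z).im := Complex.imCLM.contDiff.comp hf1
  have hq : ContDiff ℝ 1 q := by rw [hq_eq]; exact (hre.mul hre).add (him.mul him)
  have h1s : (1:ℝ) ≤ s / 2 := by linarith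
  have hfun_eq : (fun z => q z ^ (s/2)) = (fun z => ‖f z‖ ^ s) :=
    funext fun z => normSq_rpow_half _ _
  have hgC1 : ContDiff ℝ 1 (fun z => ‖f z‖ ^ s) := by
    rw [← hfun_eq]
    exact ContDiff.rpow_const_of_le (m := 1) hq (by exact_mod_cast h1s)
  refine ⟨hgC1, fun z => ?_⟩
  -- derivative computation at z
  set Df := fderiv ℝ (⇑f) z with hDfdef
  set w := f z with hwdef
  set RR := Complex.reCLM.comp Df with hRRdef
  set II := Complex.imCLM.comp Df with hIIdef
  have hre' : HasFDerivAt (fun z => (f z).re) RR z :=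
    (Complex.reCLM.hasFDerivAt).comp z (hdf z).hasFDerivAt
  have him' : HasFDerivAt (fun z => (f z).im) II z :=
    (Complex.imCLM.hasFDerivAt).comp z (hdf z).hasFDerivAt
  set Dq : (Fin n → ℂ) →L[ℝ] ℝ := (2 * w.re) • RR + (2 * w.im) • II with hDqdef
  have hq' : HasFDerivAt q Dq z := by
    have h2 : HasFDerivAt (fun z => (f z).re * (f z).re + (f z).im * (f z).im)
        ((w.re • RR + w.re • RR) + (w.im • II + w.im • II)) z :=
      (hre'.mul hre').add (him'.mul him')
    rw [hq_eq, hDqdef, two_mul, add_smul, two_mul, add_smul]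
    exact h2
  set D : (Fin n → ℂ) →L[ℝ] ℝ := ((s/2) * q z ^ (s/2 - 1)) • Dq with hDdef
  have hg' : HasFDerivAt (fun z => q z ^ (s/2)) D z := hq'.rpow_const (Or.inr h1s)
  have hfd : fderiv ℝ (fun z => ‖f z‖ ^ s) z = D := by rw [← hfun_eq]; exact hg'.fderiv
  rw [hfd]
  -- Dq applied to a vector
  have hDq_apply : ∀ v : Fin n → ℂ, Dq v = 2 * ((starRingEnd ℂ) w * Df v).re := by
    intro v
    simp only [hDqdef, hRRdef, hIIdef, ContinuousLinearMap.add_apply, ContinuousLinearMap.smul_apply,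
      ContinuousLinearMap.coe_comp', Function.comp_apply, Complex.reCLM_apply,
      Complex.imCLM_apply, smul_eq_mul, Complex.mul_re, Complex.conj_re, Complex.conj_im]
    ring
  have hqz_nonneg : 0 ≤ q z ^ (s/2 - 1) := Real.rpow_nonneg (Complex.normSq_nonneg _) _
  -- bound each partial derivative
  have hbound : ∀ j : Fin n, |D (Pi.single j 1)| ≤ s * ‖w‖ ^ (s-1) * ‖Lop n j (⇑f) z‖ := by
    intro j
    have hval : Df (Pi.single j 1) = Lop n j (⇑f) z + Complex.I * (-(z j).im : ℝ) / 2 * w := by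
      simp only [Lop, ← hDfdef, ← hwdef]
      push_cast
      ring
    have : ((starRingEnd ℂ) w * Df (Pi.single j 1)).re
        = ((starRingEnd ℂ) w * Lop n j (⇑f) z).re := by rw [hval]; exact re_conj_aux _ _ _
    have hfac : (0:ℝ) ≤ s/2 * q z ^ (s/2-1) := mul_nonneg (by linarith) hqz_nonneg
    rw [hDdef, ContinuousLinearMap.smul_apply, smul_eq_mul, hDq_apply, this, abs_mul,
      abs_of_nonneg hfac]
    calc s/2 * q z ^ (s/2-1) * |2 * ((starRingEnd ℂ) w * Lop n j (⇑f) z).re|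
        ≤ s/2 * q z ^ (s/2-1) * (2 * (‖w‖ * ‖Lop n j (⇑f) z‖)) := by
          refine mul_le_mul_of_nonneg_left ?_ hfac
          rw [abs_mul, abs_two]
          exact mul_le_mul_of_nonneg_left (re_conj_mul_bound _ _) (by norm_num)
      _ = s * (q z ^ (s/2-1) * ‖w‖) * ‖Lop n j (⇑f) z‖ := by ring
      _ = s * ‖w‖ ^ (s-1) * ‖Lop n j (⇑f) z‖ := by rw [hqdef, normSq_rpow_aux _ _ hs]
  have hbound' : ∀ j : Fin n, |D (Pi.single j Complex.I)| ≤ s * ‖w‖ ^ (s-1) * ‖Mop n j (⇑f) z‖ := by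
    intro j
    have hval : Df (Pi.single j Complex.I) = Mop n j (⇑f) z + Complex.I * ((z j).re : ℝ) / 2 * w := by
      simp only [Mop, ← hDfdef, ← hwdef]
      push_cast
      ring
    have : ((starRingEnd ℂ) w * Df (Pi.single j Complex.I)).re
        = ((starRingEnd ℂ) w * Mop n j (⇑f) z).re := by rw [hval]; exact re_conj_aux _ _ _
    have hfac : (0:ℝ) ≤ s/2 * q z ^ (s/2-1) := mul_nonneg (by linarith) hqz_nonneg
    rw [hDdef, ContinuousLinearMap.smul_apply, smul_eq_mul, hDq_apply, this, abs_mul,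
      abs_of_nonneg hfac]
    calc s/2 * q z ^ (s/2-1) * |2 * ((starRingEnd ℂ) w * Mop n j (⇑f) z).re|
        ≤ s/2 * q z ^ (s/2-1) * (2 * (‖w‖ * ‖Mop n j (⇑f) z‖)) := by
          refine mul_le_mul_of_nonneg_left ?_ hfac
          rw [abs_mul, abs_two]
          exact mul_le_mul_of_nonneg_left (re_conj_mul_bound _ _) (by norm_num)
      _ = s * (q z ^ (s/2-1) * ‖w‖) * ‖Mop n j (⇑f) z‖ := by ring
      _ = s * ‖w‖ ^ (s-1) * ‖Mop n j (⇑f) z‖ := by rw [hqdef, normSq_rpow_aux _ _ hs]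
  calc ‖D‖ ≤ ∑ j : Fin n, (|D (Pi.single j 1)| + |D (Pi.single j Complex.I)|) :=
        opNorm_le_sum_single D
    _ ≤ ∑ j : Fin n, (s * ‖w‖ ^ (s-1) * ‖Lop n j (⇑f) z‖ + s * ‖w‖ ^ (s-1) * ‖Mop n j (⇑f) z‖) := by
        apply Finset.sum_le_sum
        intro j _
        exact add_le_add (hbound j) (hbound' j)
    _ = s * ‖w‖ ^ (s-1) * ∑ j : Fin n, (‖Lop n j (⇑f) z‖ + ‖Mop n j (⇑f) z‖) := by
        rw [Finset.mul_sum]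
        congr 1
        funext j
        ring

lemma exists_cutoff (n : ℕ) :
    ∃ M : ℝ, 0 ≤ M ∧ ∀ k : ℕ, ∃ χ : (Fin n → ℂ) → ℝ,
      ContDiff ℝ 1 χ ∧ HasCompactSupport χ ∧
      (∀ z, z ∈ closedBall (0 : Fin n → ℂ) (k+1) → χ z = 1) ∧
      (∀ z, 0 ≤ χ z ∧ χ z ≤ 1) ∧ (∀ z, ‖fderiv ℝ χ z‖ ≤ M) := by
  set φ : ContDiffBump (0 : Fin n → ℂ) := ⟨1, 2, one_pos, one_lt_two⟩ with hφ
  have hφc : ContDiff ℝ 1 ⇑φ := φ.contDiff (n := 1)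
  have hφcs : HasCompactSupport ⇑φ := φ.hasCompactSupport
  obtain ⟨M, hM⟩ := ((hφc.continuous_fderiv one_ne_zero).bounded_above_of_compact_support
    (hφcs.fderiv ℝ))
  refine ⟨max M 0, le_max_right _ _, fun k => ?_⟩
  set c : ℝ := ((k:ℝ)+1)⁻¹ with hc
  have hc0 : 0 < c := by positivity
  have hc1 : c ≤ 1 := by
    rw [hc]
    rw [inv_le_one_iff₀]
    right; push_cast; linarith [Nat.cast_nonneg (α := ℝ) k]
  refine ⟨fun z => φ (c • z), ?_, ?_, ?_, ?_, ?_⟩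
  · exact hφc.comp (contDiff_const_smul c)
  · apply HasCompactSupport.intro (isCompact_closedBall (0 : Fin n → ℂ) (2*((k:ℝ)+1)))
    intro z hz
    have hznorm : 2*((k:ℝ)+1) < ‖z‖ := by
      simp only [mem_closedBall, dist_zero_right, not_le] at hz
      exact hz
    apply Function.notMem_support.mp
    rw [φ.support_eq]
    simp only [mem_ball, dist_zero_right, not_lt]
    calc (2:ℝ) = c * (2*((k:ℝ)+1)) := by rw [hc]; field_simp
      _ ≤ c * ‖z‖ := mul_le_mul_of_nonneg_left hznorm.le hc0.le
      _ = ‖c • z‖ := by rw [norm_smul, Real.norm_eq_abs, abs_of_pos hc0]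
  · intro z hz
    apply φ.one_of_mem_closedBall
    have hz' : ‖z‖ ≤ (k:ℝ)+1 := by
      rw [mem_closedBall, dist_zero_right] at hz
      exact_mod_cast hz
    show c • z ∈ closedBall (0 : Fin n → ℂ) 1
    rw [mem_closedBall, dist_zero_right]
    calc ‖c • z‖ = c * ‖z‖ := by rw [norm_smul, Real.norm_eq_abs, abs_of_pos hc0]
      _ ≤ c * ((k:ℝ)+1) := by gcongr
      _ = 1 := by rw [hc]; field_simp
  · exact fun z => ⟨φ.nonneg, φ.le_one⟩
  · intro z
    have hd : HasFDerivAt (fun z => φ (c • z)) (c • fderiv ℝ ⇑φ (c • z)) z := by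
      have h1 : HasFDerivAt (fun z : Fin n → ℂ => c • z)
          (c • ContinuousLinearMap.id ℝ (Fin n → ℂ)) z := (hasFDerivAt_id z).const_smul c
      have h2 : HasFDerivAt ⇑φ (fderiv ℝ ⇑φ (c • z)) (c • z) :=
        ((hφc.differentiable one_ne_zero) (c • z)).hasFDerivAt
      have h3 := h2.comp z h1
      have h4 : (fderiv ℝ ⇑φ (c • z)).comp (c • ContinuousLinearMap.id ℝ (Fin n → ℂ))
          = c • fderiv ℝ ⇑φ (c • z) := by
        ext v
        simp
      rwa [h4] at h3
    rw [hd.fderiv]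
    calc ‖c • fderiv ℝ ⇑φ (c • z)‖ = ‖c‖ * ‖fderiv ℝ ⇑φ (c • z)‖ := norm_smul _ _
      _ ≤ 1 * M := by
          apply mul_le_mul _ (hM _) (norm_nonneg _) zero_le_one
          rw [Real.norm_eq_abs, abs_of_pos hc0]; exact hc1
      _ = M := one_mul M
      _ ≤ max M 0 := le_max_left _ _

/-- conjugate exponent of 2n -/
def dC (n : ℕ) : ℝ := (2*(n:ℝ)) / (2*(n:ℝ) - 1)

lemma dC_gt_one (hn : 1 ≤ n) : 1 < dC n := by
  have h : (1:ℝ) ≤ n := by exact_mod_cast hn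
  unfold dC
  rw [lt_div_iff₀ (by linarith)]
  linarith

lemma dC_pos (hn : 1 ≤ n) : 0 < dC n := lt_trans one_pos (dC_gt_one hn)

lemma isConj_dC (hn : 1 ≤ n) : ((2*(n:ℝ))).HolderConjugate (dC n) := by
  have h1 : (1:ℝ) < 2*(n:ℝ) := by
    have : (1:ℝ) ≤ n := by exact_mod_cast hn
    linarith
  have h2 := Real.HolderConjugate.conjExponent h1
  have heq : (2*(n:ℝ)).conjExponent = dC n := by
    unfold Real.conjExponent dC
    ring_nf
  rwa [heq] at h2

lemma finrank_eq (n : ℕ) : ((Module.finrank ℝ (Fin n → ℂ)) : ℝ) = 2*(n:ℝ) := by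
  have : Module.finrank ℝ (Fin n → ℂ) = 2 * n := by
    simp [Module.finrank_pi_fintype]; ring
  rw [this]; push_cast; ring

lemma ofReal_norm_eq_coe_nnnorm {E : Type*} [SeminormedAddCommGroup E] (a : E) :
    ENNReal.ofReal ‖a‖ = (‖a‖₊ : ℝ≥0∞) := ofReal_norm a

lemma coe_nnnorm_rpow_eq (w : ℂ) (s : ℝ) (hs : 0 ≤ s) :
    ENNReal.ofReal (‖w‖ ^ s) = (‖w‖₊ : ℝ≥0∞) ^ s := by
  rw [← ofReal_norm_eq_coe_nnnorm, ENNReal.ofReal_rpow_of_nonneg (norm_nonneg _) hs]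

lemma sob_step (hn : 1 ≤ n) :
    ∃ Mc : ℝ≥0∞, Mc ≠ ⊤ ∧ ∀ s : ℝ, 2 ≤ s → ∀ f : SchwartzMap (Fin n → ℂ) ℂ,
      ∫⁻ z, (‖f z‖₊ : ℝ≥0∞) ^ (s * dC n) ≤
        (lintegralPowLePowLIntegralFDerivConst (volume : Measure (Fin n → ℂ)) (dC n) : ℝ≥0∞) *
        ((∫⁻ z, ENNReal.ofReal (s * ‖f z‖ ^ (s-1) *
            ∑ j : Fin n, (‖Lop n j (⇑f) z‖ + ‖Mop n j (⇑f) z‖)))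
          + Mc * ∫⁻ z, (‖f z‖₊ : ℝ≥0∞) ^ s) ^ (dC n) := by
  obtain ⟨M, hM0, hcut⟩ := exists_cutoff n
  refine ⟨ENNReal.ofReal M, ofReal_ne_top, fun s hs f => ?_⟩
  have hs0 : (0:ℝ) ≤ s := by linarith
  have hs1 : (0:ℝ) ≤ s - 1 := by linarith
  obtain ⟨hgC1, hgrad⟩ := grad_lemma s hs f
  set g : (Fin n → ℂ) → ℝ := fun z => ‖f z‖ ^ s with hgdef
  have hgnn : ∀ z, 0 ≤ g z := fun z => Real.rpow_nonneg (norm_nonneg _) _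
  set A : ℝ≥0∞ := ∫⁻ z, ENNReal.ofReal (s * ‖f z‖ ^ (s-1) *
      ∑ j : Fin n, (‖Lop n j (⇑f) z‖ + ‖Mop n j (⇑f) z‖)) with hA
  set B : ℝ≥0∞ := ∫⁻ z, (‖f z‖₊ : ℝ≥0∞) ^ s with hB
  set K : ℝ≥0∞ :=
    (lintegralPowLePowLIntegralFDerivConst (volume : Measure (Fin n → ℂ)) (dC n) : ℝ≥0∞)
  have hp' : ((Module.finrank ℝ (Fin n → ℂ)) : ℝ).HolderConjugate (dC n) := by
    rw [finrank_eq n]; exact isConj_dC hn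
  have hdC0 : (0:ℝ) ≤ dC n := (dC_pos hn).le
  -- continuity of the sum coefficient function
  have hcontsum : Continuous (fun z =>
      ∑ j : Fin n, (‖Lop n j (⇑f) z‖ + ‖Mop n j (⇑f) z‖)) := by
    apply continuous_finset_sum
    exact fun j _ => ((cont_Lop f j).norm.add (cont_Mop f j).norm)
  have hcontF1 : Continuous (fun z => s * ‖f z‖ ^ (s-1) *
      ∑ j : Fin n, (‖Lop n j (⇑f) z‖ + ‖Mop n j (⇑f) z‖)) := by
    apply Continuous.mul _ hcontsum
    apply continuous_const.mul
    exact f.continuous.norm.rpow_const (fun z => Or.inr hs1)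
  -- the key estimate for each k
  have hk : ∀ k : ℕ, ∫⁻ z in closedBall (0 : Fin n → ℂ) (k+1),
      (‖f z‖₊ : ℝ≥0∞) ^ (s * dC n) ≤ K * (A + ENNReal.ofReal M * B) ^ (dC n) := by
    intro k
    obtain ⟨χ, hχ1, hχcs, hχone, hχ01, hχd⟩ := hcut k
    set u : (Fin n → ℂ) → ℝ := fun z => χ z * g z with hu
    have huC1 : ContDiff ℝ 1 u := hχ1.mul hgC1
    have hucs : HasCompactSupport u := hχcs.mul_right
    have sob := lintegral_pow_le_pow_lintegral_fderiv (volume : Measure (Fin n → ℂ))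
      huC1 hucs hp'
    -- pointwise derivative bound
    have hptw : ∀ z, (‖fderiv ℝ u z‖₊ : ℝ≥0∞) ≤
        ENNReal.ofReal (s * ‖f z‖ ^ (s-1) *
          ∑ j : Fin n, (‖Lop n j (⇑f) z‖ + ‖Mop n j (⇑f) z‖))
        + ENNReal.ofReal M * (‖f z‖₊ : ℝ≥0∞) ^ s := by
      intro z
      have hd : fderiv ℝ u z = χ z • fderiv ℝ g z + g z • fderiv ℝ χ z :=
        fderiv_mul (hχ1.differentiable one_ne_zero z) (hgC1.differentiable one_ne_zero z)
      have hnorm : ‖fderiv ℝ u z‖ ≤ (s * ‖f z‖ ^ (s-1) *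
          ∑ j : Fin n, (‖Lop n j (⇑f) z‖ + ‖Mop n j (⇑f) z‖)) + M * g z := by
        rw [hd]
        calc ‖χ z • fderiv ℝ g z + g z • fderiv ℝ χ z‖
            ≤ ‖χ z • fderiv ℝ g z‖ + ‖g z • fderiv ℝ χ z‖ := norm_add_le _ _
          _ = |χ z| * ‖fderiv ℝ g z‖ + |g z| * ‖fderiv ℝ χ z‖ := by
              rw [norm_smul, norm_smul, Real.norm_eq_abs, Real.norm_eq_abs]
          _ ≤ 1 * (s * ‖f z‖ ^ (s-1) *
                ∑ j : Fin n, (‖Lop n j (⇑f) z‖ + ‖Mop n j (⇑f) z‖)) + g z * M := by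
              apply add_le_add
              · apply mul_le_mul _ (hgrad z) (norm_nonneg _) zero_le_one
                rw [abs_le]; exact ⟨by linarith [(hχ01 z).1], (hχ01 z).2⟩
              · rw [abs_of_nonneg (hgnn z)]
                exact mul_le_mul_of_nonneg_left (hχd z) (hgnn z)
          _ = (s * ‖f z‖ ^ (s-1) *
                ∑ j : Fin n, (‖Lop n j (⇑f) z‖ + ‖Mop n j (⇑f) z‖)) + M * g z := by ring
      calc (‖fderiv ℝ u z‖₊ : ℝ≥0∞) = ENNReal.ofReal ‖fderiv ℝ u z‖ :=
            (ofReal_norm_eq_coe_nnnorm _).symm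
        _ ≤ ENNReal.ofReal ((s * ‖f z‖ ^ (s-1) *
              ∑ j : Fin n, (‖Lop n j (⇑f) z‖ + ‖Mop n j (⇑f) z‖)) + M * g z) :=
            ENNReal.ofReal_le_ofReal hnorm
        _ ≤ _ := by
            rw [ENNReal.ofReal_add (by positivity) (mul_nonneg hM0 (hgnn z)),
              ENNReal.ofReal_mul hM0, hgdef]
            rw [coe_nnnorm_rpow_eq _ _ hs0]
    -- integral derivative bound
    have hint : ∫⁻ z, (‖fderiv ℝ u z‖₊ : ℝ≥0∞) ≤ A + ENNReal.ofReal M * B := by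
      calc ∫⁻ z, (‖fderiv ℝ u z‖₊ : ℝ≥0∞)
          ≤ ∫⁻ z, (ENNReal.ofReal (s * ‖f z‖ ^ (s-1) *
              ∑ j : Fin n, (‖Lop n j (⇑f) z‖ + ‖Mop n j (⇑f) z‖))
            + ENNReal.ofReal M * (‖f z‖₊ : ℝ≥0∞) ^ s) := lintegral_mono hptw
        _ = A + ∫⁻ z, ENNReal.ofReal M * (‖f z‖₊ : ℝ≥0∞) ^ s := by
            rw [hA]
            exact lintegral_add_left
              (ENNReal.continuous_ofReal.comp hcontF1).measurable _
        _ = A + ENNReal.ofReal M * B := by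
            rw [lintegral_const_mul' _ _ ofReal_ne_top, hB]
    -- on the ball, u = g
    have hball : ∀ z ∈ closedBall (0 : Fin n → ℂ) (k+1),
        (‖f z‖₊ : ℝ≥0∞) ^ (s * dC n) = (‖u z‖₊ : ℝ≥0∞) ^ (dC n) := by
      intro z hz
      have h1 : u z = g z := by rw [hu]; simp [hχone z hz]
      have h2 : (‖u z‖₊ : ℝ≥0∞) = (‖f z‖₊ : ℝ≥0∞) ^ s := by
        rw [← ofReal_norm_eq_coe_nnnorm, h1, Real.norm_eq_abs, abs_of_nonneg (hgnn z), hgdef,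
          coe_nnnorm_rpow_eq _ _ hs0]
      rw [h2, ← ENNReal.rpow_mul]
    calc ∫⁻ z in closedBall (0 : Fin n → ℂ) (k+1), (‖f z‖₊ : ℝ≥0∞) ^ (s * dC n)
        = ∫⁻ z in closedBall (0 : Fin n → ℂ) (k+1), (‖u z‖₊ : ℝ≥0∞) ^ (dC n) := by
          apply setLIntegral_congr_fun measurableSet_closedBall
          exact hball
      _ ≤ ∫⁻ z, (‖u z‖₊ : ℝ≥0∞) ^ (dC n) := setLIntegral_le_lintegral _ _
      _ ≤ K * (∫⁻ z, (‖fderiv ℝ u z‖₊ : ℝ≥0∞)) ^ (dC n) := sob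
      _ ≤ K * (A + ENNReal.ofReal M * B) ^ (dC n) := by
          gcongr
  -- now take the supremum over k
  set Fk : ℕ → (Fin n → ℂ) → ℝ≥0∞ :=
    fun k => (closedBall (0 : Fin n → ℂ) (k+1)).indicator
      (fun z => (‖f z‖₊ : ℝ≥0∞) ^ (s * dC n)) with hFk
  have hmeas : ∀ z' : ℝ, Measurable (fun z : Fin n → ℂ => (‖f z‖₊ : ℝ≥0∞) ^ z') := by
    intro z'
    exact (ENNReal.continuous_rpow_const.comp
      (ENNReal.continuous_coe.comp f.continuous.nnnorm)).measurable
  have hFmeas : ∀ k, Measurable (Fk k) :=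
    fun k => (hmeas _).indicator measurableSet_closedBall
  have hFmono : Monotone Fk := by
    intro a b hab
    apply Set.indicator_le_indicator_of_subset
    · apply closedBall_subset_closedBall
      have : (a:ℝ) ≤ b := by exact_mod_cast hab
      linarith
    · exact fun z => zero_le
  have hFsup : ∀ z, ⨆ k, Fk k z = (‖f z‖₊ : ℝ≥0∞) ^ (s * dC n) := by
    intro z
    apply le_antisymm
    · exact iSup_le fun k => Set.indicator_le_self _ _ z
    · obtain ⟨k, hk'⟩ := exists_nat_ge ‖z‖
      apply le_iSup_of_le k
      simp only [hFk]
      have hmem : z ∈ closedBall (0 : Fin n → ℂ) (k+1) := by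
        rw [mem_closedBall, dist_zero_right]
        push_cast
        linarith
      rw [Set.indicator_of_mem hmem]
  calc ∫⁻ z, (‖f z‖₊ : ℝ≥0∞) ^ (s * dC n) = ∫⁻ z, ⨆ k, Fk k z := by
        apply lintegral_congr
        intro z
        rw [hFsup z]
      _ = ⨆ k, ∫⁻ z, Fk k z := lintegral_iSup hFmeas hFmono
      _ ≤ K * (A + ENNReal.ofReal M * B) ^ (dC n) := by
        apply iSup_le
        intro k
        simp only [hFk]
        rw [lintegral_indicator measurableSet_closedBall]
        exact hk k

lemma enn_rpow_add (x : ℝ≥0∞) {a b : ℝ} (ha : 0 < a) (hb : 0 < b) :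
    x ^ (a+b) = x^a * x^b := by
  rcases eq_or_ne x 0 with h0 | h0
  · subst h0
    rw [ENNReal.zero_rpow_of_pos (by linarith), ENNReal.zero_rpow_of_pos ha,
      ENNReal.zero_rpow_of_pos hb, zero_mul]
  rcases eq_or_ne x ⊤ with ht | ht
  · subst ht
    rw [ENNReal.top_rpow_of_pos (by linarith), ENNReal.top_rpow_of_pos ha,
      ENNReal.top_rpow_of_pos hb, ENNReal.top_mul_top]
  · exact ENNReal.rpow_add a b h0 ht

lemma enn_rpow_le_one_add (c : ℝ≥0∞) {e : ℝ} (he0 : 0 ≤ e) (he1 : e ≤ 1) : c ^ e ≤ 1 + c := by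
  rcases le_total c 1 with h | h
  · exact le_trans (ENNReal.rpow_le_one h he0) le_self_add
  · calc c ^ e ≤ c ^ (1:ℝ) := ENNReal.rpow_le_rpow_of_exponent_le h he1
      _ = c := ENNReal.rpow_one c
      _ ≤ 1 + c := le_add_self

lemma eLpNorm_two_eq (h : (Fin n → ℂ) → ℂ) :
    eLpNorm h 2 volume = (∫⁻ z, (‖h z‖₊ : ℝ≥0∞) ^ (2:ℝ)) ^ (1/(2:ℝ)) := by
  rw [eLpNorm_eq_lintegral_rpow_enorm_toReal (by norm_num) (by norm_num)]
  norm_num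
  rfl

lemma I2_le_sob (f : SchwartzMap (Fin n → ℂ) ℂ) :
    ∫⁻ z, (‖f z‖₊ : ℝ≥0∞) ^ (2:ℝ) ≤ (sobNorm n 2 ⇑f) ^ (2:ℝ) := by
  have h := eLpNorm_le_sobNorm (n := n) ⇑f
  rw [eLpNorm_two_eq] at h
  have h2 := ENNReal.rpow_le_rpow h (by norm_num : (0:ℝ) ≤ 2)
  rwa [← ENNReal.rpow_mul, show (1/(2:ℝ)) * 2 = 1 by norm_num, ENNReal.rpow_one] at h2

lemma lint_sq_le_sob_L (f : SchwartzMap (Fin n → ℂ) ℂ) (j : Fin n) :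
    (∫⁻ z, (‖Lop n j (⇑f) z‖₊ : ℝ≥0∞) ^ (2:ℝ)) ^ (1/(2:ℝ)) ≤ sobNorm n 2 ⇑f := by
  rw [← eLpNorm_two_eq]; exact eLpNorm_Lop_le_sobNorm _ j

lemma lint_sq_le_sob_M (f : SchwartzMap (Fin n → ℂ) ℂ) (j : Fin n) :
    (∫⁻ z, (‖Mop n j (⇑f) z‖₊ : ℝ≥0∞) ^ (2:ℝ)) ^ (1/(2:ℝ)) ≤ sobNorm n 2 ⇑f := by
  rw [← eLpNorm_two_eq]; exact eLpNorm_Mop_le_sobNorm _ j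

lemma meas_nnnorm_rpow (f : SchwartzMap (Fin n → ℂ) ℂ) (e : ℝ) :
    Measurable (fun z : Fin n → ℂ => (‖f z‖₊ : ℝ≥0∞) ^ e) :=
  (ENNReal.continuous_rpow_const.comp
    (ENNReal.continuous_coe.comp f.continuous.nnnorm)).measurable

lemma A_bound (s : ℝ) (hs : 2 ≤ s) (f : SchwartzMap (Fin n → ℂ) ℂ) :
    (∫⁻ z, ENNReal.ofReal (s * ‖f z‖ ^ (s-1) *
        ∑ j : Fin n, (‖Lop n j (⇑f) z‖ + ‖Mop n j (⇑f) z‖)))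
      ≤ ENNReal.ofReal s * (2*n : ℕ) *
        ((∫⁻ z, (‖f z‖₊ : ℝ≥0∞) ^ (2*(s-1))) ^ (1/(2:ℝ)) * sobNorm n 2 ⇑f) := by
  have hs0 : (0:ℝ) ≤ s := by linarith
  have hs1 : (0:ℝ) ≤ s - 1 := by linarith
  set N := sobNorm n 2 ⇑f with hN
  set I : ℝ≥0∞ := (∫⁻ z, (‖f z‖₊ : ℝ≥0∞) ^ (2*(s-1))) ^ (1/(2:ℝ)) with hI
  -- measurability facts
  have hmL : ∀ j : Fin n, Measurable (fun z => ((‖Lop n j (⇑f) z‖₊ : ℝ≥0∞))) :=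
    fun j => (ENNReal.continuous_coe.comp (cont_Lop f j).nnnorm).measurable
  have hmM : ∀ j : Fin n, Measurable (fun z => ((‖Mop n j (⇑f) z‖₊ : ℝ≥0∞))) :=
    fun j => (ENNReal.continuous_coe.comp (cont_Mop f j).nnnorm).measurable
  have hmf : Measurable (fun z : Fin n → ℂ => (‖f z‖₊ : ℝ≥0∞) ^ (s-1)) := meas_nnnorm_rpow f _
  -- pointwise rewriting of the integrand
  have hptw : ∀ z, ENNReal.ofReal (s * ‖f z‖ ^ (s-1) *
      ∑ j : Fin n, (‖Lop n j (⇑f) z‖ + ‖Mop n j (⇑f) z‖)) =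
      ENNReal.ofReal s * ∑ j : Fin n, ((‖f z‖₊ : ℝ≥0∞) ^ (s-1) * (‖Lop n j (⇑f) z‖₊ : ℝ≥0∞)
        + (‖f z‖₊ : ℝ≥0∞) ^ (s-1) * (‖Mop n j (⇑f) z‖₊ : ℝ≥0∞)) := by
    intro z
    rw [ENNReal.ofReal_mul (by positivity), ENNReal.ofReal_mul hs0,
      coe_nnnorm_rpow_eq _ _ hs1, mul_assoc]
    congr 1
    rw [ENNReal.ofReal_sum_of_nonneg (fun j _ => by positivity), Finset.mul_sum]
    congr 1
    funext j
    rw [ENNReal.ofReal_add (norm_nonneg _) (norm_nonneg _), mul_add]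
    simp [enorm_eq_nnnorm]
  -- Cauchy-Schwarz for each factor
  have hconj : (2:ℝ).HolderConjugate 2 := ⟨by norm_num, by norm_num, by norm_num⟩
  have hCS : ∀ g : (Fin n → ℂ) → ℝ≥0∞, Measurable g →
      (∫⁻ z, (‖f z‖₊ : ℝ≥0∞) ^ (s-1) * g z) ≤
        I * (∫⁻ z, (g z) ^ (2:ℝ)) ^ (1/(2:ℝ)) := by
    intro g hg
    have := ENNReal.lintegral_mul_le_Lp_mul_Lq volume hconj hmf.aemeasurable hg.aemeasurable
    simp only [Pi.mul_apply] at this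
    calc (∫⁻ z, (‖f z‖₊ : ℝ≥0∞) ^ (s-1) * g z)
        ≤ (∫⁻ z, ((‖f z‖₊ : ℝ≥0∞) ^ (s-1)) ^ (2:ℝ)) ^ (1/(2:ℝ)) *
          (∫⁻ z, (g z) ^ (2:ℝ)) ^ (1/(2:ℝ)) := this
      _ = I * (∫⁻ z, (g z) ^ (2:ℝ)) ^ (1/(2:ℝ)) := by
          rw [hI]
          congr 2
          apply lintegral_congr
          intro z
          rw [← ENNReal.rpow_mul, mul_comm (s-1) 2]
  -- put everything together
  calc (∫⁻ z, ENNReal.ofReal (s * ‖f z‖ ^ (s-1) *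
        ∑ j : Fin n, (‖Lop n j (⇑f) z‖ + ‖Mop n j (⇑f) z‖)))
      = ENNReal.ofReal s * ∫⁻ z,
          ∑ j : Fin n, ((‖f z‖₊ : ℝ≥0∞) ^ (s-1) * (‖Lop n j (⇑f) z‖₊ : ℝ≥0∞)
            + (‖f z‖₊ : ℝ≥0∞) ^ (s-1) * (‖Mop n j (⇑f) z‖₊ : ℝ≥0∞)) := by
        rw [← lintegral_const_mul' _ _ ofReal_ne_top]
        exact lintegral_congr hptw
    _ = ENNReal.ofReal s * ∑ j : Fin n, ∫⁻ z,
          ((‖f z‖₊ : ℝ≥0∞) ^ (s-1) * (‖Lop n j (⇑f) z‖₊ : ℝ≥0∞)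
            + (‖f z‖₊ : ℝ≥0∞) ^ (s-1) * (‖Mop n j (⇑f) z‖₊ : ℝ≥0∞)) := by
        congr 1
        apply lintegral_finset_sum
        intro j _
        exact (hmf.mul (hmL j)).add (hmf.mul (hmM j))
    _ ≤ ENNReal.ofReal s * ∑ j : Fin n, (I * N + I * N) := by
        apply mul_le_mul_right
        apply Finset.sum_le_sum
        intro j _
        rw [lintegral_add_left (f := fun z => (‖f z‖₊ : ℝ≥0∞) ^ (s-1) * (‖Lop n j (⇑f) z‖₊ : ℝ≥0∞)) (hmf.mul (hmL j))]
        apply add_le_add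
        · calc (∫⁻ z, (‖f z‖₊ : ℝ≥0∞) ^ (s-1) * (‖Lop n j (⇑f) z‖₊ : ℝ≥0∞))
              ≤ I * (∫⁻ z, ((‖Lop n j (⇑f) z‖₊ : ℝ≥0∞)) ^ (2:ℝ)) ^ (1/(2:ℝ)) :=
                hCS _ (hmL j)
            _ ≤ I * N := mul_le_mul_right (lint_sq_le_sob_L f j) I
        · calc (∫⁻ z, (‖f z‖₊ : ℝ≥0∞) ^ (s-1) * (‖Mop n j (⇑f) z‖₊ : ℝ≥0∞))
              ≤ I * (∫⁻ z, ((‖Mop n j (⇑f) z‖₊ : ℝ≥0∞)) ^ (2:ℝ)) ^ (1/(2:ℝ)) :=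
                hCS _ (hmM j)
            _ ≤ I * N := mul_le_mul_right (lint_sq_le_sob_M f j) I
    _ = ENNReal.ofReal s * (2*n : ℕ) * (I * N) := by
        rw [Finset.sum_const, Finset.card_univ, Fintype.card_fin]
        rw [nsmul_eq_mul]
        push_cast
        ring

def rseq (n : ℕ) : ℕ → ℝ
  | 0 => 2
  | k+1 => (rseq n k / 2 + 1) * dC n

lemma rseq_ge_two (hn : 1 ≤ n) : ∀ k, 2 ≤ rseq n k := by
  intro k
  induction k with
  | zero => simp [rseq]
  | succ k ih =>
    show (2:ℝ) ≤ (rseq n k / 2 + 1) * dC n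
    calc (2:ℝ) = 2 * 1 := by ring
      _ ≤ (rseq n k / 2 + 1) * dC n :=
        mul_le_mul (by linarith) (dC_gt_one hn).le zero_le_one (by linarith)

lemma sobolev_induct (hn : 1 ≤ n) (k : ℕ) :
    ∃ c : ℝ≥0∞, c ≠ ⊤ ∧ ∀ f : SchwartzMap (Fin n → ℂ) ℂ,
      ∫⁻ z, (‖f z‖₊ : ℝ≥0∞) ^ (rseq n k) ≤ c * (sobNorm n 2 ⇑f) ^ (rseq n k) := by
  induction k with
  | zero =>
    refine ⟨1, one_ne_top, fun f => ?_⟩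
    rw [one_mul]
    show ∫⁻ z, (‖f z‖₊ : ℝ≥0∞) ^ (2:ℝ) ≤ (sobNorm n 2 ⇑f) ^ (2:ℝ)
    exact I2_le_sob f
  | succ k ih =>
    obtain ⟨c, hc, hck⟩ := ih
    obtain ⟨Mc, hMc, hsob⟩ := sob_step hn
    set r : ℝ := rseq n k with hr
    have hr2 : 2 ≤ r := rseq_ge_two hn k
    set s : ℝ := r / 2 + 1 with hsdef
    have hs2 : 2 ≤ s := by rw [hsdef]; linarith
    have hs0 : (0:ℝ) < s := by linarith
    have hdC0 : (0:ℝ) ≤ dC n := (dC_pos hn).le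
    set K : ℝ≥0∞ :=
      (lintegralPowLePowLIntegralFDerivConst (volume : Measure (Fin n → ℂ)) (dC n) : ℝ≥0∞)
      with hK
    set D : ℝ≥0∞ := ENNReal.ofReal s * (2*n : ℕ) * c ^ (1/(2:ℝ)) + Mc * (1 + c) with hD
    have hDne : D ≠ ⊤ := by
      rw [hD]
      apply ENNReal.add_ne_top.mpr
      constructor
      · exact ENNReal.mul_ne_top (ENNReal.mul_ne_top ofReal_ne_top (natCast_ne_top _))
          (ENNReal.rpow_ne_top_of_nonneg (by norm_num) hc)
      · exact ENNReal.mul_ne_top hMc (ENNReal.add_ne_top.mpr ⟨one_ne_top, hc⟩)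
    refine ⟨K * D ^ (dC n), ENNReal.mul_ne_top coe_ne_top
      (ENNReal.rpow_ne_top_of_nonneg hdC0 hDne), fun f => ?_⟩
    set N : ℝ≥0∞ := sobNorm n 2 ⇑f with hN
    -- bound the A-term
    have hIr : (∫⁻ z, (‖f z‖₊ : ℝ≥0∞) ^ (2*(s-1))) ^ (1/(2:ℝ)) ≤ c ^ (1/(2:ℝ)) * N ^ (s-1) := by
      have h1 : 2*(s-1) = r := by rw [hsdef]; ring
      rw [h1]
      calc (∫⁻ z, (‖f z‖₊ : ℝ≥0∞) ^ r) ^ (1/(2:ℝ))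
          ≤ (c * N ^ r) ^ (1/(2:ℝ)) := ENNReal.rpow_le_rpow (hck f) (by norm_num)
        _ = c ^ (1/(2:ℝ)) * (N ^ r) ^ (1/(2:ℝ)) := ENNReal.mul_rpow_of_nonneg _ _ (by norm_num)
        _ = c ^ (1/(2:ℝ)) * N ^ (s-1) := by
            rw [← ENNReal.rpow_mul]
            congr 1
            rw [hsdef]
            ring
    have hA : (∫⁻ z, ENNReal.ofReal (s * ‖f z‖ ^ (s-1) *
        ∑ j : Fin n, (‖Lop n j (⇑f) z‖ + ‖Mop n j (⇑f) z‖)))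
        ≤ ENNReal.ofReal s * (2*n : ℕ) * c ^ (1/(2:ℝ)) * N ^ s := by
      calc (∫⁻ z, ENNReal.ofReal (s * ‖f z‖ ^ (s-1) *
            ∑ j : Fin n, (‖Lop n j (⇑f) z‖ + ‖Mop n j (⇑f) z‖)))
          ≤ ENNReal.ofReal s * (2*n : ℕ) *
            ((∫⁻ z, (‖f z‖₊ : ℝ≥0∞) ^ (2*(s-1))) ^ (1/(2:ℝ)) * N) := A_bound s hs2 f
        _ ≤ ENNReal.ofReal s * (2*n : ℕ) * (c ^ (1/(2:ℝ)) * N ^ (s-1) * N) := by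
            gcongr
        _ = ENNReal.ofReal s * (2*n : ℕ) * c ^ (1/(2:ℝ)) * N ^ s := by
            rw [show s = (s-1) + 1 by ring, enn_rpow_add N (by linarith) one_pos,
              ENNReal.rpow_one]
            ring
    -- bound the B-term
    have hB : (∫⁻ z, (‖f z‖₊ : ℝ≥0∞) ^ s) ≤ (1 + c) * N ^ s := by
      rcases eq_or_lt_of_le hr2 with heq | hlt
      · -- r = 2, s = 2 = r
        have hsr : s = r := by rw [hsdef, ← heq]; norm_num
        rw [hsr]
        calc (∫⁻ z, (‖f z‖₊ : ℝ≥0∞) ^ r) ≤ c * N ^ r := hck f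
          _ ≤ (1 + c) * N ^ r := by
              apply mul_le_mul_left
              exact le_add_self
      · -- 2 < r, use Hölder
        set lam : ℝ := (r - s) / (r - 2) with hlam
        have hrs : s < r := by rw [hsdef]; linarith
        have hlam0 : 0 < lam := div_pos (by linarith) (by linarith)
        have hs2' : 2 < s := by rw [hsdef]; linarith
        have hlam1 : lam < 1 := by
          rw [hlam, div_lt_one (by linarith)]
          linarith
        have hml : lam * (r-2) = r - s := by
          rw [hlam]
          exact div_mul_cancel₀ _ (by linarith)
        have harith : 2*lam + r*(1-lam) = s := by linear_combination -hml
        have hconj : (1/lam).HolderConjugate (1/(1-lam)) := by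
          constructor
          · rw [one_div, inv_inv, one_div, inv_inv]; ring
          · exact one_div_pos.mpr hlam0
          · exact one_div_pos.mpr (by linarith)
        have hmeas1 : AEMeasurable (fun z : Fin n → ℂ => (‖f z‖₊ : ℝ≥0∞) ^ (2*lam)) volume :=
          (meas_nnnorm_rpow f _).aemeasurable
        have hmeas2 : AEMeasurable (fun z : Fin n → ℂ => (‖f z‖₊ : ℝ≥0∞) ^ (r*(1-lam))) volume :=
          (meas_nnnorm_rpow f _).aemeasurable
        have hH := ENNReal.lintegral_mul_le_Lp_mul_Lq volume hconj hmeas1 hmeas2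
        simp only [Pi.mul_apply] at hH
        have heq1 : ∀ z : Fin n → ℂ, (‖f z‖₊ : ℝ≥0∞) ^ (2*lam) * (‖f z‖₊ : ℝ≥0∞) ^ (r*(1-lam))
            = (‖f z‖₊ : ℝ≥0∞) ^ s := by
          intro z
          rw [← enn_rpow_add _ (by positivity) (mul_pos (by linarith) (by linarith)), harith]
        have heq2 : ∀ z : Fin n → ℂ, ((‖f z‖₊ : ℝ≥0∞) ^ (2*lam)) ^ (1/lam)
            = (‖f z‖₊ : ℝ≥0∞) ^ (2:ℝ) := by
          intro z
          rw [← ENNReal.rpow_mul, mul_one_div, mul_div_assoc,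
            div_self (ne_of_gt hlam0), mul_one]
        have heq3 : ∀ z : Fin n → ℂ, ((‖f z‖₊ : ℝ≥0∞) ^ (r*(1-lam))) ^ (1/(1-lam))
            = (‖f z‖₊ : ℝ≥0∞) ^ r := by
          intro z
          rw [← ENNReal.rpow_mul, mul_one_div,
            mul_div_cancel_right₀ _ (by linarith : (1:ℝ)-lam ≠ 0)]
        calc (∫⁻ z, (‖f z‖₊ : ℝ≥0∞) ^ s)
            = ∫⁻ z, (‖f z‖₊ : ℝ≥0∞) ^ (2*lam) * (‖f z‖₊ : ℝ≥0∞) ^ (r*(1-lam)) :=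
              lintegral_congr (fun z => (heq1 z).symm)
          _ ≤ (∫⁻ z, ((‖f z‖₊ : ℝ≥0∞) ^ (2*lam)) ^ (1/lam)) ^ (1/(1/lam)) *
              (∫⁻ z, ((‖f z‖₊ : ℝ≥0∞) ^ (r*(1-lam))) ^ (1/(1-lam))) ^ (1/(1/(1-lam))) := hH
          _ = (∫⁻ z, (‖f z‖₊ : ℝ≥0∞) ^ (2:ℝ)) ^ lam *
              (∫⁻ z, (‖f z‖₊ : ℝ≥0∞) ^ r) ^ (1-lam) := by
              rw [lintegral_congr heq2, lintegral_congr heq3, one_div_one_div, one_div_one_div]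
          _ ≤ ((N : ℝ≥0∞) ^ (2:ℝ)) ^ lam * (c * N ^ r) ^ (1-lam) :=
              mul_le_mul' (ENNReal.rpow_le_rpow (I2_le_sob f) hlam0.le)
                (ENNReal.rpow_le_rpow (hck f) (by linarith))
          _ = c ^ (1-lam) * (N ^ (2*lam) * N ^ (r*(1-lam))) := by
              rw [ENNReal.mul_rpow_of_nonneg _ _ (by linarith : (0:ℝ) ≤ 1-lam),
                ← ENNReal.rpow_mul, ← ENNReal.rpow_mul]
              ring
          _ = c ^ (1-lam) * N ^ s := by
              rw [← enn_rpow_add _ (by positivity) (mul_pos (by linarith) (by linarith)),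
                harith]
          _ ≤ (1 + c) * N ^ s := by
              apply mul_le_mul_left
              exact enn_rpow_le_one_add c (by linarith) (by linarith)
    -- combine
    have hstep := hsob s hs2 f
    have hrk1 : rseq n (k+1) = s * dC n := by
      show (rseq n k / 2 + 1) * dC n = s * dC n
      rw [hsdef, hr]
    rw [hrk1]
    calc ∫⁻ z, (‖f z‖₊ : ℝ≥0∞) ^ (s * dC n)
        ≤ K * ((∫⁻ z, ENNReal.ofReal (s * ‖f z‖ ^ (s-1) *
            ∑ j : Fin n, (‖Lop n j (⇑f) z‖ + ‖Mop n j (⇑f) z‖)))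
          + Mc * ∫⁻ z, (‖f z‖₊ : ℝ≥0∞) ^ s) ^ (dC n) := hstep
      _ ≤ K * (ENNReal.ofReal s * (2*n : ℕ) * c ^ (1/(2:ℝ)) * N ^ s
          + Mc * ((1 + c) * N ^ s)) ^ (dC n) := by
          gcongr
      _ = K * (D * N ^ s) ^ (dC n) := by
          rw [hD]
          congr 2
          ring
      _ = K * D ^ (dC n) * (N ^ (s * dC n)) := by
          rw [ENNReal.mul_rpow_of_nonneg _ _ hdC0, ENNReal.rpow_mul, mul_assoc]

lemma rseq_unbounded (hn : 1 ≤ n) (p : ℝ) (hp2 : 2 ≤ p) (hpn : ((n:ℝ)-1)*p < 2*(n:ℝ)) :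
    ∃ k, p ≤ rseq n k := by
  by_contra hcon
  push_neg at hcon
  have hn1 : (1:ℝ) ≤ n := by exact_mod_cast hn
  have h2n1 : (0:ℝ) < 2*(n:ℝ) - 1 := by linarith
  set δ : ℝ := (2*(n:ℝ) - ((n:ℝ)-1)*p) / (2*(n:ℝ)-1) with hδdef
  have hδ : 0 < δ := div_pos (by linarith) h2n1
  have hstep : ∀ k, rseq n k + δ ≤ rseq n (k+1) := by
    intro k
    set r := rseq n k with hrdef
    have hrp : r < p := hcon k
    have hδval : δ * (2*(n:ℝ)-1) = 2*(n:ℝ) - ((n:ℝ)-1)*p :=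
      div_mul_cancel₀ _ (ne_of_gt h2n1)
    have hmul : ((n:ℝ)-1)*r ≤ ((n:ℝ)-1)*p :=
      mul_le_mul_of_nonneg_left hrp.le (by linarith)
    have key : (r + δ) * (2*(n:ℝ)-1) ≤ (r/2+1) * (2*(n:ℝ)) := by nlinarith
    show r + δ ≤ (r/2+1) * dC n
    rw [show (r/2+1) * dC n = ((r/2+1) * (2*(n:ℝ))) / (2*(n:ℝ)-1) by
      unfold dC; field_simp]
    rw [le_div_iff₀ h2n1]
    exact key
  have hlow : ∀ k, 2 + k * δ ≤ rseq n k := by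
    intro k
    induction k with
    | zero => simp [rseq]
    | succ k ih =>
      have := hstep k
      push_cast
      push_cast at ih
      linarith
  obtain ⟨k, hk⟩ := exists_nat_gt ((p-2)/δ)
  have : (p-2)/δ * δ < k * δ := by
    apply mul_lt_mul_of_pos_right hk hδ
  rw [div_mul_cancel₀ _ (ne_of_gt hδ)] at this
  have h1 := hlow k
  have h2 := hcon k
  linarith

lemma sobolev_embed (hn : 1 ≤ n) (p : ℝ) (hp2 : 2 ≤ p) (hpn : ((n:ℝ)-1)*p < 2*(n:ℝ)) :
    ∃ Kc : ℝ≥0∞, Kc ≠ ⊤ ∧ ∀ f : SchwartzMap (Fin n → ℂ) ℂ,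
      eLpNorm ⇑f (ENNReal.ofReal p) volume ≤ Kc * sobNorm n 2 ⇑f := by
  obtain ⟨k, hk⟩ := rseq_unbounded hn p hp2 hpn
  obtain ⟨c, hc, hck⟩ := sobolev_induct hn k
  set r : ℝ := rseq n k with hrdef
  have hr2 : 2 ≤ r := rseq_ge_two hn k
  have hp0 : (0:ℝ) < p := by linarith
  refine ⟨(1+c) ^ (1/p), ENNReal.rpow_ne_top_of_nonneg (by positivity)
    (ENNReal.add_ne_top.mpr ⟨one_ne_top, hc⟩), fun f => ?_⟩
  set N : ℝ≥0∞ := sobNorm n 2 ⇑f with hN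
  -- main integral bound
  have hIp : ∫⁻ z, (‖f z‖₊ : ℝ≥0∞) ^ p ≤ (1+c) * N ^ p := by
    rcases eq_or_lt_of_le hp2 with hp2e | hp2l
    · rw [← hp2e]
      calc ∫⁻ z, (‖f z‖₊ : ℝ≥0∞) ^ (2:ℝ) ≤ N ^ (2:ℝ) := I2_le_sob f
        _ = 1 * N ^ (2:ℝ) := (one_mul _).symm
        _ ≤ (1+c) * N ^ (2:ℝ) := mul_le_mul_left (le_add_of_nonneg_right zero_le) _
    rcases eq_or_lt_of_le hk with hpr | hpr
    · rw [hpr] at *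
      calc ∫⁻ z, (‖f z‖₊ : ℝ≥0∞) ^ r ≤ c * N ^ r := hck f
        _ ≤ (1+c) * N ^ r := mul_le_mul_left le_add_self _
    · -- 2 < p < r : Hölder interpolation
      set lam : ℝ := (r - p) / (r - 2) with hlam
      have hrr : 2 < r := by linarith
      have hlam0 : 0 < lam := div_pos (by linarith) (by linarith)
      have hlam1 : lam < 1 := by
        rw [hlam, div_lt_one (by linarith)]
        linarith
      have hml : lam * (r-2) = r - p := by
        rw [hlam]
        exact div_mul_cancel₀ _ (by linarith)
      have harith : 2*lam + r*(1-lam) = p := by linear_combination -hml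
      have hconj : (1/lam).HolderConjugate (1/(1-lam)) := by
        constructor
        · rw [one_div, inv_inv, one_div, inv_inv]; ring
        · exact one_div_pos.mpr hlam0
        · exact one_div_pos.mpr (by linarith)
      have hH := ENNReal.lintegral_mul_le_Lp_mul_Lq volume hconj
        (meas_nnnorm_rpow f (2*lam)).aemeasurable
        (meas_nnnorm_rpow f (r*(1-lam))).aemeasurable
      simp only [Pi.mul_apply] at hH
      have heq1 : ∀ z : Fin n → ℂ, (‖f z‖₊ : ℝ≥0∞) ^ (2*lam) * (‖f z‖₊ : ℝ≥0∞) ^ (r*(1-lam))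
          = (‖f z‖₊ : ℝ≥0∞) ^ p := by
        intro z
        rw [← enn_rpow_add _ (by positivity) (mul_pos (by linarith) (by linarith)), harith]
      have heq2 : ∀ z : Fin n → ℂ, ((‖f z‖₊ : ℝ≥0∞) ^ (2*lam)) ^ (1/lam)
          = (‖f z‖₊ : ℝ≥0∞) ^ (2:ℝ) := by
        intro z
        rw [← ENNReal.rpow_mul, mul_one_div, mul_div_assoc,
          div_self (ne_of_gt hlam0), mul_one]
      have heq3 : ∀ z : Fin n → ℂ, ((‖f z‖₊ : ℝ≥0∞) ^ (r*(1-lam))) ^ (1/(1-lam))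
          = (‖f z‖₊ : ℝ≥0∞) ^ r := by
        intro z
        rw [← ENNReal.rpow_mul, mul_one_div,
          mul_div_cancel_right₀ _ (by linarith : (1:ℝ)-lam ≠ 0)]
      calc (∫⁻ z, (‖f z‖₊ : ℝ≥0∞) ^ p)
          = ∫⁻ z, (‖f z‖₊ : ℝ≥0∞) ^ (2*lam) * (‖f z‖₊ : ℝ≥0∞) ^ (r*(1-lam)) :=
            lintegral_congr (fun z => (heq1 z).symm)
        _ ≤ (∫⁻ z, ((‖f z‖₊ : ℝ≥0∞) ^ (2*lam)) ^ (1/lam)) ^ (1/(1/lam)) *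
            (∫⁻ z, ((‖f z‖₊ : ℝ≥0∞) ^ (r*(1-lam))) ^ (1/(1-lam))) ^ (1/(1/(1-lam))) := hH
        _ = (∫⁻ z, (‖f z‖₊ : ℝ≥0∞) ^ (2:ℝ)) ^ lam *
            (∫⁻ z, (‖f z‖₊ : ℝ≥0∞) ^ r) ^ (1-lam) := by
            rw [lintegral_congr heq2, lintegral_congr heq3, one_div_one_div, one_div_one_div]
        _ ≤ ((N : ℝ≥0∞) ^ (2:ℝ)) ^ lam * (c * N ^ r) ^ (1-lam) :=
            mul_le_mul' (ENNReal.rpow_le_rpow (I2_le_sob f) hlam0.le)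
              (ENNReal.rpow_le_rpow (hck f) (by linarith))
        _ = c ^ (1-lam) * (N ^ (2*lam) * N ^ (r*(1-lam))) := by
            rw [ENNReal.mul_rpow_of_nonneg _ _ (by linarith : (0:ℝ) ≤ 1-lam),
              ← ENNReal.rpow_mul, ← ENNReal.rpow_mul]
            ring
        _ = c ^ (1-lam) * N ^ p := by
            rw [← enn_rpow_add _ (by positivity) (mul_pos (by linarith) (by linarith)),
              harith]
        _ ≤ (1 + c) * N ^ p := by
            apply mul_le_mul_left
            exact enn_rpow_le_one_add c (by linarith) (by linarith)
  -- conclude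
  have hel : eLpNorm ⇑f (ENNReal.ofReal p) volume
      = (∫⁻ z, (‖f z‖₊ : ℝ≥0∞) ^ p) ^ (1/p) := by
    rw [eLpNorm_eq_lintegral_rpow_enorm_toReal (by simp [hp0] : ENNReal.ofReal p ≠ 0) ofReal_ne_top,
      ENNReal.toReal_ofReal hp0.le]
    rfl
  rw [hel]
  calc (∫⁻ z, (‖f z‖₊ : ℝ≥0∞) ^ p) ^ (1/p)
      ≤ ((1+c) * N ^ p) ^ (1/p) := ENNReal.rpow_le_rpow hIp (by positivity)
    _ = (1+c) ^ (1/p) * N := by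
        rw [ENNReal.mul_rpow_of_nonneg _ _ (by positivity), ← ENNReal.rpow_mul,
          mul_one_div, div_self hp0.ne', ENNReal.rpow_one]

end Stmt12Aux

open Stmt12Aux

/-- Space-time nonlinearity estimate: with `|ψ(x,y,t,r)| ≤ C₀ r^α`, `p = α+2`, `(q,p)`
admissible, `G(z,t,w) = ψ(x,y,t,|w|)w`, one has
`‖G(·,·,u)‖_{L^{q'}([−T,T];L^{p'})} ≤ C T^{(q−q')/(qq')} (ess sup_t ‖u(t)‖_{W̃^{1,2}})^α
‖u‖_{L^q([−T,T];L^p)}`, with `C` depending only on `n`, `α`, `q`, `C₀`. -/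
theorem stmt12 (n : ℕ) (hn : 1 ≤ n) (α : ℝ) (hα0 : 0 ≤ α)
    (hα : 1 < n → α < 2 / ((n : ℝ) - 1)) (q : ℝ) (hadm : Admissible n q (α + 2))
    (C₀ : ℝ) :
    ∃ C : ℝ, 0 < C ∧
      ∀ ψ : (Fin n → ℝ) → (Fin n → ℝ) → ℝ → ℝ → ℂ,
        (∀ x y t r, 0 ≤ r → ‖ψ x y t r‖ ≤ C₀ * r ^ α) →
        ∀ T : ℝ, 0 < T → ∀ u : ℝ → SchwartzMap (Fin n → ℂ) ℂ,
          Measurable (fun zt : (Fin n → ℂ) × ℝ => u zt.2 zt.1) →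
          (∫⁻ t in Set.Icc (-T) T,
              (eLpNorm (fun z : Fin n → ℂ =>
                  ψ (fun j => (z j).re) (fun j => (z j).im) t (‖u t z‖) * u t z)
                (ENNReal.ofReal ((α + 2) / (α + 1))) volume) ^ (q / (q - 1)))
              ^ ((q - 1) / q) ≤
            ENNReal.ofReal C *
              ENNReal.ofReal T ^ ((q - q / (q - 1)) / (q * (q / (q - 1)))) *
              (essSup (fun t => sobNorm n 2 (⇑(u t)))
                  (volume.restrict (Set.Icc (-T) T))) ^ α *
              (∫⁻ t in Set.Icc (-T) T,
                  (eLpNorm (⇑(u t)) (ENNReal.ofReal (α + 2)) volume) ^ q) ^ (1 / q) := by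
  obtain ⟨hq2, -, -⟩ := hadm
  have hq1 : (1:ℝ) < q := by linarith
  have hq0 : (0:ℝ) < q := by linarith
  set q' : ℝ := q / (q-1) with hq'def
  have hq'0 : 0 < q' := div_pos hq0 (by linarith)
  have hq'q : q' * (q-1) = q := div_mul_cancel₀ _ (by linarith)
  have hα1 : (0:ℝ) < α + 1 := by linarith
  have hα2 : (0:ℝ) < α + 2 := by linarith
  -- Sobolev embedding constant
  have hpn : ((n:ℝ)-1)*(α+2) < 2*(n:ℝ) := by
    rcases Nat.lt_or_ge 1 n with h1n | h1n
    · have hn1 : (1:ℝ) < n := by exact_mod_cast h1n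
      have hαn := hα h1n
      have h0 : (0:ℝ) < (n:ℝ) - 1 := by linarith
      have : ((n:ℝ)-1) * α < ((n:ℝ)-1) * (2/((n:ℝ)-1)) :=
        mul_lt_mul_of_pos_left hαn h0
      rw [mul_div_cancel₀ _ (ne_of_gt h0)] at this
      nlinarith
    · have : n = 1 := le_antisymm h1n hn
      subst this
      norm_num
  obtain ⟨Kc, hKc, hsob⟩ := sobolev_embed hn (α+2) (by linarith) hpn
  -- the T-exponent
  have hq10 : q - 1 ≠ 0 := by linarith
  have hq00 : q ≠ 0 := by linarith
  have heT : (q - q/(q-1))/(q*(q/(q-1))) = (q-2)/q := by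
    rw [div_eq_div_iff (ne_of_gt (by positivity : (0:ℝ) < q*(q/(q-1)))) hq00]
    field_simp
    ring
  have heT0 : (0:ℝ) ≤ (q-2)/q := div_nonneg (by linarith) (by linarith)
  -- the constant
  set Creal : ℝ := |C₀| * (Kc ^ α).toReal * 2 ^ ((q-2)/q) + 1 with hCreal
  have hCpos : 0 < Creal := by
    have h1 : (0:ℝ) ≤ |C₀| * (Kc ^ α).toReal * 2 ^ ((q-2)/q) := by positivity
    rw [hCreal]
    linarith
  refine ⟨Creal, hCpos, ?_⟩
  intro ψ hψ T hT u hmeas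
  -- C₀ is nonnegative
  have hC₀ : 0 ≤ C₀ := by
    have h1 := hψ 0 0 0 1 zero_le_one
    rw [Real.one_rpow, mul_one] at h1
    exact le_trans (norm_nonneg _) h1
  rw [heT]
  set S : ℝ≥0∞ := essSup (fun t => sobNorm n 2 (⇑(u t)))
    (volume.restrict (Set.Icc (-T) T)) with hS
  set P : ℝ≥0∞ := ENNReal.ofReal (α+2) with hP
  set P' : ℝ≥0∞ := ENNReal.ofReal ((α+2)/(α+1)) with hP'
  set h : ℝ → ℝ≥0∞ := fun t => eLpNorm ⇑(u t) P volume with hh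
  -- measurability of h
  have hmeas_h : Measurable h := by
    have h1 : Measurable (Function.uncurry
        (fun (z : Fin n → ℂ) (t : ℝ) => (‖u t z‖₊ : ℝ≥0∞) ^ (α+2))) := by
      apply ENNReal.continuous_rpow_const.measurable.comp
      exact hmeas.nnnorm.coe_nnreal_ennreal
    have h2 : Measurable (fun t => ∫⁻ z, (‖u t z‖₊ : ℝ≥0∞) ^ (α+2)) :=
      Measurable.lintegral_prod_left h1
    have h3 : h = fun t => (∫⁻ z, (‖u t z‖₊ : ℝ≥0∞) ^ (α+2)) ^ (1/(α+2)) := by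
      funext t
      simp only [hh, hP]
      rw [eLpNorm_eq_lintegral_rpow_enorm_toReal
        (by simp [hα2] : ENNReal.ofReal (α+2) ≠ 0) ofReal_ne_top,
        ENNReal.toReal_ofReal hα2.le]
      rfl
    rw [h3]
    exact ENNReal.continuous_rpow_const.measurable.comp h2
  -- pointwise-in-t bound
  have hptN : ∀ t, eLpNorm (fun z : Fin n → ℂ =>
      ψ (fun j => (z j).re) (fun j => (z j).im) t (‖u t z‖) * u t z) P' volume
      ≤ ENNReal.ofReal C₀ * (h t) ^ (α+1) := by
    intro t
    have hmono : ∀ z : Fin n → ℂ,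
        ‖ψ (fun j => (z j).re) (fun j => (z j).im) t (‖u t z‖) * u t z‖ ≤
        ‖C₀ * ‖u t z‖ ^ (α+1)‖ := by
      intro z
      rw [norm_mul, Real.norm_eq_abs, abs_of_nonneg (by positivity)]
      calc ‖ψ (fun j => (z j).re) (fun j => (z j).im) t (‖u t z‖)‖ * ‖u t z‖
          ≤ (C₀ * ‖u t z‖ ^ α) * ‖u t z‖ := by
            apply mul_le_mul_of_nonneg_right _ (norm_nonneg _)
            exact hψ _ _ _ _ (norm_nonneg _)
        _ = C₀ * ‖u t z‖ ^ (α+1) := by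
            rw [show ‖u t z‖ = ‖u t z‖ from rfl,
              show (α:ℝ) + 1 = α + 1 from rfl,
              Real.rpow_add' (norm_nonneg _) (by linarith), Real.rpow_one]
            ring
    calc eLpNorm (fun z : Fin n → ℂ =>
        ψ (fun j => (z j).re) (fun j => (z j).im) t (‖u t z‖) * u t z) P' volume
        ≤ eLpNorm (fun z : Fin n → ℂ => C₀ * ‖u t z‖ ^ (α+1)) P' volume := eLpNorm_mono hmono
      _ = (‖C₀‖₊ : ℝ≥0∞) * eLpNorm (fun z : Fin n → ℂ => ‖u t z‖ ^ (α+1)) P' volume := by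
          rw [show (fun z : Fin n → ℂ => C₀ * ‖u t z‖ ^ (α+1))
            = C₀ • (fun z : Fin n → ℂ => ‖u t z‖ ^ (α+1)) from funext fun z => by
              simp [smul_eq_mul]]
          exact eLpNorm_const_smul C₀ _ _ _
      _ = ENNReal.ofReal C₀ * (eLpNorm ⇑(u t) (P' * ENNReal.ofReal (α+1)) volume) ^ (α+1) := by
          rw [eLpNorm_norm_rpow _ hα1, ← ofReal_norm_eq_coe_nnnorm, Real.norm_eq_abs,
            abs_of_nonneg hC₀]
      _ = ENNReal.ofReal C₀ * (h t) ^ (α+1) := by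
          have : P' * ENNReal.ofReal (α+1) = P := by
            rw [hP', hP, ← ENNReal.ofReal_mul (by positivity),
              div_mul_cancel₀ _ (ne_of_gt hα1)]
          rw [this, hh]
  -- exponent splitting
  have hsplit : ∀ x : ℝ≥0∞, x ^ (α+1) = x ^ α * x := by
    intro x
    rcases eq_or_lt_of_le hα0 with h0 | h0
    · rw [← h0]
      simp
    · rw [enn_rpow_add x h0 one_pos, ENNReal.rpow_one]
  -- a.e.-in-t bound
  have hae : ∀ᵐ t ∂(volume.restrict (Set.Icc (-T) T)),
      eLpNorm (fun z : Fin n → ℂ =>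
        ψ (fun j => (z j).re) (fun j => (z j).im) t (‖u t z‖) * u t z) P' volume
      ≤ (ENNReal.ofReal C₀ * (Kc * S) ^ α) * h t := by
    filter_upwards [ae_le_essSup (fun t => sobNorm n 2 (⇑(u t)))] with t ht
    have hle : h t ≤ Kc * S := le_trans (hsob (u t)) (mul_le_mul_right ht Kc)
    calc eLpNorm (fun z : Fin n → ℂ =>
        ψ (fun j => (z j).re) (fun j => (z j).im) t (‖u t z‖) * u t z) P' volume
        ≤ ENNReal.ofReal C₀ * (h t) ^ (α+1) := hptN t
      _ = ENNReal.ofReal C₀ * ((h t) ^ α * h t) := by rw [hsplit]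
      _ ≤ ENNReal.ofReal C₀ * ((Kc * S) ^ α * h t) := by
          apply mul_le_mul_right
          exact mul_le_mul_left (ENNReal.rpow_le_rpow hle hα0) _
      _ = (ENNReal.ofReal C₀ * (Kc * S) ^ α) * h t := by ring
  -- Hölder in time
  set J : ℝ≥0∞ := ∫⁻ t in Set.Icc (-T) T, (h t) ^ q with hJ
  have hconj : (q-1).HolderConjugate ((q-1)/(q-2)) := by
    constructor
    · rw [inv_div, inv_eq_one_div, ← add_div, show (1:ℝ)+(q-2) = q-1 by ring,
        div_self (by linarith : q-1 ≠ 0), inv_one]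
    · linarith
    · exact div_pos (by linarith) (by linarith)
  have hHolder : ∫⁻ t in Set.Icc (-T) T, (h t) ^ q' ≤
      J ^ (1/(q-1)) * (ENNReal.ofReal (2*T)) ^ ((q-2)/(q-1)) := by
    have hg : AEMeasurable (fun _ : ℝ => (1:ℝ≥0∞)) (volume.restrict (Set.Icc (-T) T)) :=
      aemeasurable_const
    have hf : AEMeasurable (fun t => (h t) ^ q') (volume.restrict (Set.Icc (-T) T)) :=
      (ENNReal.continuous_rpow_const.measurable.comp hmeas_h).aemeasurable
    have hH := ENNReal.lintegral_mul_le_Lp_mul_Lq (volume.restrict (Set.Icc (-T) T))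
      hconj hf hg
    simp only [Pi.mul_apply, mul_one, ENNReal.one_rpow] at hH
    calc ∫⁻ t in Set.Icc (-T) T, (h t) ^ q'
        ≤ (∫⁻ t in Set.Icc (-T) T, ((h t) ^ q') ^ (q-1)) ^ (1/(q-1)) *
          (∫⁻ _ in Set.Icc (-T) T, (1:ℝ≥0∞)) ^ (1/((q-1)/(q-2))) := hH
      _ = J ^ (1/(q-1)) * (ENNReal.ofReal (2*T)) ^ ((q-2)/(q-1)) := by
          have hJeq : (∫⁻ t in Set.Icc (-T) T, ((h t) ^ q') ^ (q-1)) = J := by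
            rw [hJ]
            apply lintegral_congr
            intro t
            rw [← ENNReal.rpow_mul, hq'q]
          have hvol : (∫⁻ _ in Set.Icc (-T) T, (1:ℝ≥0∞)) = ENNReal.ofReal (2*T) := by
            rw [lintegral_one, Measure.restrict_apply_univ, Real.volume_Icc]
            congr 1
            ring
          rw [hJeq, hvol, one_div_div]
  -- put everything together
  have hq'ne : q' ≠ 0 := ne_of_gt hq'0
  have e1 : (1:ℝ)/(q-1) * (1/q') = 1/q := by
    rw [hq'def]
    field_simp
  have e2 : (q-2)/(q-1) * (1/q') = (q-2)/q := by
    rw [hq'def]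
    field_simp
  have hconstle : ENNReal.ofReal C₀ * Kc ^ α * (ENNReal.ofReal 2) ^ ((q-2)/q)
      ≤ ENNReal.ofReal Creal := by
    rw [show Kc ^ α = ENNReal.ofReal ((Kc ^ α).toReal) from
        (ENNReal.ofReal_toReal (ENNReal.rpow_ne_top_of_nonneg hα0 hKc)).symm,
      ENNReal.ofReal_rpow_of_nonneg (by norm_num) heT0,
      ← ENNReal.ofReal_mul hC₀, ← ENNReal.ofReal_mul (by positivity)]
    apply ENNReal.ofReal_le_ofReal
    rw [hCreal, abs_of_nonneg hC₀]
    nlinarith [ENNReal.toReal_nonneg (a := Kc ^ α),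
      Real.rpow_nonneg (by norm_num : (0:ℝ) ≤ 2) ((q-2)/q), hC₀]
  calc (∫⁻ t in Set.Icc (-T) T,
        (eLpNorm (fun z : Fin n → ℂ =>
            ψ (fun j => (z j).re) (fun j => (z j).im) t (‖u t z‖) * u t z)
          P' volume) ^ q') ^ ((q-1)/q)
      ≤ (∫⁻ t in Set.Icc (-T) T,
          ((ENNReal.ofReal C₀ * (Kc * S) ^ α) * h t) ^ q') ^ ((q-1)/q) := by
        apply ENNReal.rpow_le_rpow _ (div_nonneg (by linarith) (by linarith))
        apply lintegral_mono_ae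
        filter_upwards [hae] with t ht
        exact ENNReal.rpow_le_rpow ht hq'0.le
    _ = ((ENNReal.ofReal C₀ * (Kc * S) ^ α) ^ q' *
          ∫⁻ t in Set.Icc (-T) T, (h t) ^ q') ^ ((q-1)/q) := by
        congr 1
        have hm2 : Measurable (fun t => h t ^ q') :=
          ENNReal.continuous_rpow_const.measurable.comp hmeas_h
        rw [← lintegral_const_mul _ hm2]
        apply lintegral_congr
        intro t
        rw [ENNReal.mul_rpow_of_nonneg _ _ hq'0.le]
    _ ≤ ((ENNReal.ofReal C₀ * (Kc * S) ^ α) ^ q' *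
          (J ^ (1/(q-1)) * (ENNReal.ofReal (2*T)) ^ ((q-2)/(q-1)))) ^ ((q-1)/q) := by
        apply ENNReal.rpow_le_rpow _ (div_nonneg (by linarith) (by linarith))
        exact mul_le_mul_right hHolder _
    _ = (ENNReal.ofReal C₀ * (Kc * S) ^ α) * (J ^ (1/q) *
          (ENNReal.ofReal (2*T)) ^ ((q-2)/q)) := by
        have hqq' : (q-1)/q = 1/q' := by rw [hq'def]; rw [one_div_div]
        have h1q' : (0:ℝ) ≤ 1/q' := le_of_lt (one_div_pos.mpr hq'0)
        rw [hqq', ENNReal.mul_rpow_of_nonneg _ _ h1q',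
          ENNReal.mul_rpow_of_nonneg _ _ h1q',
          ← ENNReal.rpow_mul (ENNReal.ofReal C₀ * (Kc * S) ^ α) q' (1/q'),
          ← ENNReal.rpow_mul J, ← ENNReal.rpow_mul (ENNReal.ofReal (2*T)),
          mul_one_div_cancel hq'ne, ENNReal.rpow_one, e1, e2]
    _ = (ENNReal.ofReal C₀ * Kc ^ α * (ENNReal.ofReal 2) ^ ((q-2)/q)) *
          (ENNReal.ofReal T ^ ((q-2)/q) * (S ^ α * J ^ (1/q))) := by
        rw [ENNReal.mul_rpow_of_nonneg Kc S hα0,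
          ENNReal.ofReal_mul (by norm_num : (0:ℝ) ≤ 2),
          ENNReal.mul_rpow_of_nonneg _ _ heT0]
        ring
    _ ≤ ENNReal.ofReal Creal *
          (ENNReal.ofReal T ^ ((q-2)/q) * (S ^ α * J ^ (1/q))) :=
        mul_le_mul_left hconstle _
    _ = ENNReal.ofReal Creal * ENNReal.ofReal T ^ ((q-2)/q) * S ^ α * J ^ (1/q) := by
        ring
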